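/- Let α > 1. Then ∫_0^1 t^{-1/α} e^{-t} dt ≤ ((1 + e^{-1})α² − e^{-1}α) / ((α−1)(2α−1)); that is, the lower incomplete Gamma function satisfies γ(1 − 1/α, 1) ≤ ((1+e^{-1})α² − e^{-1}α) / ((α−1)(2α−1)). -/

import Mathlib

/-- lower incomplete Gamma bound
`γ(1−1/α, 1) = ∫_0^1 t^{-1/α} e^{-t} dt ≤ ((1+e^{-1})α² − e^{-1}α)/((α−1)(2α−1))`. -/
theorem incGamma_one_sub_inv_bound (α : ℝ) (hα : 1 < α) :
    (∫ t in (0 : ℝ)..1, t ^ (-(1 / α)) * Real.exp (-t))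
      ≤ ((1 + Real.exp (-1)) * α ^ 2 - Real.exp (-1) * α) /
          ((α - 1) * (2 * α - 1)) := by
  have hα0 : 0 < α := lt_trans one_pos hα
  set r : ℝ := -(1 / α) with hrdef
  set c : ℝ := Real.exp (-1) - 1 with hcdef
  have hr1 : -1 < r := by
    have : 1 / α < 1 := by rw [div_lt_one hα0]; exact hα
    simp only [hrdef]; linarith
  have hr2 : -1 < r + 1 := by linarith
  have hint1 : IntervalIntegrable (fun t : ℝ => t ^ r) MeasureTheory.volume 0 1 :=
    intervalIntegral.intervalIntegrable_rpow' hr1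
  have hint2 : IntervalIntegrable (fun t : ℝ => t ^ (r + 1)) MeasureTheory.volume 0 1 :=
    intervalIntegral.intervalIntegrable_rpow' hr2
  have hintL : IntervalIntegrable (fun t : ℝ => t ^ r * Real.exp (-t))
      MeasureTheory.volume 0 1 :=
    hint1.mul_continuousOn (Continuous.continuousOn (by continuity))
  have hintR : IntervalIntegrable (fun t : ℝ => t ^ r * (1 + c * t))
      MeasureTheory.volume 0 1 :=
    hint1.mul_continuousOn (Continuous.continuousOn (by continuity))
  have hmono : (∫ t in (0 : ℝ)..1, t ^ r * Real.exp (-t))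
      ≤ ∫ t in (0 : ℝ)..1, t ^ r * (1 + c * t) := by
    apply intervalIntegral.integral_mono_on zero_le_one hintL hintR
    intro x hx
    obtain ⟨hx0, hx1⟩ := hx
    have hexp : Real.exp (-x) ≤ 1 + c * x := by
      have h := convexOn_exp.2 (Set.mem_univ (0 : ℝ)) (Set.mem_univ (-1 : ℝ))
        (by linarith : (0 : ℝ) ≤ 1 - x) hx0 (by ring)
      simp only [smul_eq_mul, mul_zero, zero_add, mul_neg, mul_one, Real.exp_zero] at h
      simp only [hcdef]; linarith
    exact mul_le_mul_of_nonneg_left hexp (Real.rpow_nonneg hx0 r)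
  have hr1ne : r + 1 ≠ 0 := by linarith
  have hr2ne : r + 2 ≠ 0 := by linarith
  have h1 : (∫ t in (0 : ℝ)..1, t ^ r) = 1 / (r + 1) := by
    rw [integral_rpow (Or.inl hr1)]
    rw [Real.one_rpow, Real.zero_rpow hr1ne]
    ring
  have h2 : (∫ t in (0 : ℝ)..1, t ^ (r + 1)) = 1 / (r + 2) := by
    rw [integral_rpow (Or.inl hr2)]
    rw [Real.one_rpow, Real.zero_rpow (by linarith : r + 1 + 1 ≠ 0)]
    have : r + 1 + 1 = r + 2 := by ring
    rw [this]; ring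
  have hsplit : (∫ t in (0 : ℝ)..1, t ^ r * (1 + c * t))
      = 1 / (r + 1) + c * (1 / (r + 2)) := by
    have hcongr : ∀ t ∈ Set.uIcc (0 : ℝ) 1,
        t ^ r * (1 + c * t) = t ^ r + c * t ^ (r + 1) := by
      intro t ht
      rcases eq_or_ne t 0 with rfl | htne
      · rw [Real.zero_rpow (by simpa [hrdef] using (ne_of_gt (by positivity : (0:ℝ) < 1/α)) : r ≠ 0),
          Real.zero_rpow hr1ne]
        ring
      · rw [Real.rpow_add_one htne]
        ring
    rw [intervalIntegral.integral_congr hcongr,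
      intervalIntegral.integral_add hint1 (hint2.const_mul c),
      intervalIntegral.integral_const_mul, h1, h2]
  have hval : 1 / (r + 1) + c * (1 / (r + 2))
      = ((1 + Real.exp (-1)) * α ^ 2 - Real.exp (-1) * α) /
          ((α - 1) * (2 * α - 1)) := by
    have hαne : α ≠ 0 := ne_of_gt hα0
    have h1 : α - 1 ≠ 0 := by linarith
    have h2 : 2 * α - 1 ≠ 0 := by linarith
    have e1 : r + 1 = (α - 1) / α := by
      simp only [hrdef]; field_simp; ring
    have e2 : r + 2 = (2 * α - 1) / α := by
      simp only [hrdef]; field_simp; ring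
    rw [e1, e2, one_div_div, one_div_div]
    simp only [hcdef]
    field_simp
    rw [add_div' _ _ _ (by linarith : α * 2 - 1 ≠ 0)]; ring
  calc (∫ t in (0 : ℝ)..1, t ^ r * Real.exp (-t))
      ≤ ∫ t in (0 : ℝ)..1, t ^ r * (1 + c * t) := hmono
    _ = 1 / (r + 1) + c * (1 / (r + 2)) := hsplit
    _ = _ := hval
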